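/- Let D ⊆ ℝ^n be Clarke regular at 0 ∈ D and let C ⊆ ℝ^n be a compact convex set with C ⊆ T_D(0) and int(T_D(0)) ≠ ∅. Let v ∈ int(T_D(0)). Then for all sufficiently small δ > 0 there exists ε̄ > 0 such that C + δv + δ²𝔹 ⊆ (1/ε)·D for all ε ∈ (0, ε̄], where 𝔹 is the closed unit ball of ℝ^n. -/

import Mathlib

open Set Filter Topology Bornology Pointwise RealInnerProductSpace

noncomputable section

/-- The (Bouligand) tangent cone of `C` at `xbar`. -/
def tanCone {n : ℕ} (C : Set (EuclideanSpace ℝ (Fin n))) (xbar : EuclideanSpace ℝ (Fin n)) :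
    Set (EuclideanSpace ℝ (Fin n)) :=
  {w | ∃ (xs : ℕ → EuclideanSpace ℝ (Fin n)) (ts : ℕ → ℝ),
    (∀ j, xs j ∈ C) ∧ (∀ j, 0 < ts j) ∧
    Tendsto ts atTop (𝓝 0) ∧ Tendsto xs atTop (𝓝 xbar) ∧
    Tendsto (fun j => (ts j)⁻¹ • (xs j - xbar)) atTop (𝓝 w)}

/-- Regular normals: `⟪v, x - xbar⟫ ≤ o(‖x - xbar‖)` for `x ∈ C`. -/
def regNormal {n : ℕ} (C : Set (EuclideanSpace ℝ (Fin n))) (xbar : EuclideanSpace ℝ (Fin n)) :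
    Set (EuclideanSpace ℝ (Fin n)) :=
  {v | ∀ ε > 0, ∃ δ > 0, ∀ x ∈ C, ‖x - xbar‖ < δ → ⟪v, x - xbar⟫ ≤ ε * ‖x - xbar‖}

/-- General normals: limits of regular normals at nearby points of `C`. -/
def genNormal {n : ℕ} (C : Set (EuclideanSpace ℝ (Fin n))) (xbar : EuclideanSpace ℝ (Fin n)) :
    Set (EuclideanSpace ℝ (Fin n)) :=
  {v | ∃ xs vs : ℕ → EuclideanSpace ℝ (Fin n),
    (∀ j, xs j ∈ C) ∧ (∀ j, vs j ∈ regNormal C (xs j)) ∧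
    Tendsto xs atTop (𝓝 xbar) ∧ Tendsto vs atTop (𝓝 v)}

/-- Clarke regularity: local closedness at `xbar` and all normals are regular. -/
def ClarkeRegularAt {n : ℕ} (C : Set (EuclideanSpace ℝ (Fin n)))
    (xbar : EuclideanSpace ℝ (Fin n)) : Prop :=
  (∃ U ∈ 𝓝 xbar, IsClosed (C ∩ U)) ∧ genNormal C xbar = regNormal C xbar

open Metric

section Aux

variable {n : ℕ}

local notation "E" => EuclideanSpace ℝ (Fin n)

lemma regNormal_smul {D : Set (EuclideanSpace ℝ (Fin n))} {y v : E} {c : ℝ} (hc : 0 < c)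
    (hv : v ∈ regNormal D y) : c • v ∈ regNormal D y := by
  intro ε hε
  obtain ⟨δ, hδ, h⟩ := hv (ε / c) (by positivity)
  refine ⟨δ, hδ, fun x hx hxy => ?_⟩
  have h1 := h x hx hxy
  rw [real_inner_smul_left]
  calc c * ⟪v, x - y⟫ ≤ c * (ε / c * ‖x - y‖) := mul_le_mul_of_nonneg_left h1 hc.le
    _ = ε * ‖x - y‖ := by field_simp

lemma regNormal_inner_nonpos {D : Set (EuclideanSpace ℝ (Fin n))} {u w : E}
    (hu : u ∈ regNormal D 0) (hw : w ∈ tanCone D 0) : ⟪u, w⟫ ≤ 0 := by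
  obtain ⟨xs, ts, hxs, hts, _htto, hxto, hwto⟩ := hw
  have key : ∀ ε : ℝ, 0 < ε → ⟪u, w⟫ ≤ ε * ‖w‖ := by
    intro ε hε
    obtain ⟨δ, hδ, h⟩ := hu ε hε
    have hev : ∀ᶠ j in atTop, dist (xs j) 0 < δ := Metric.tendsto_nhds.mp hxto δ hδ
    have hle : ∀ᶠ j in atTop,
        ⟪u, (ts j)⁻¹ • (xs j - 0)⟫ ≤ ε * ‖(ts j)⁻¹ • (xs j - 0)‖ := by
      filter_upwards [hev] with j hj
      have h1 : ⟪u, xs j - 0⟫ ≤ ε * ‖xs j - 0‖ := by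
        apply h _ (hxs j)
        rwa [dist_eq_norm] at hj
      have h2 : (0:ℝ) ≤ (ts j)⁻¹ := (inv_pos.mpr (hts j)).le
      rw [real_inner_smul_right, norm_smul, Real.norm_eq_abs, abs_of_nonneg h2]
      exact (mul_le_mul_of_nonneg_left h1 h2).trans_eq (by ring)
    have t1 : Tendsto (fun j => ⟪u, (ts j)⁻¹ • (xs j - 0)⟫) atTop (𝓝 ⟪u, w⟫) :=
      tendsto_const_nhds.inner hwto
    have t2 : Tendsto (fun j => ε * ‖(ts j)⁻¹ • (xs j - 0)‖) atTop (𝓝 (ε * ‖w‖)) :=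
      hwto.norm.const_mul ε
    exact le_of_tendsto_of_tendsto t1 t2 hle
  rcases eq_or_ne w 0 with rfl | hw0
  · simp
  · have hnorm : 0 < ‖w‖ := norm_pos_iff.mpr hw0
    by_contra hconp
    push_neg at hconp
    have h1 := key (⟪u, w⟫ / (2 * ‖w‖)) (by positivity)
    have h2 : ⟪u, w⟫ / (2 * ‖w‖) * ‖w‖ = ⟪u, w⟫ / 2 := by
      field_simp
    rw [h2] at h1
    linarith

lemma prox_regNormal {D : Set (EuclideanSpace ℝ (Fin n))} {y q : E} {δ' : ℝ} (hδ' : 0 < δ')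
    (hmin : ∀ x ∈ D, ‖x - y‖ < δ' → ‖q - y‖ ≤ ‖q - x‖) :
    q - y ∈ regNormal D y := by
  intro ε hε
  refine ⟨min δ' (2 * ε), by positivity, fun x hx hxy => ?_⟩
  have h1 : ‖q - y‖ ≤ ‖q - x‖ := hmin x hx (lt_of_lt_of_le hxy (min_le_left _ _))
  have h2 : ‖q - x‖ ^ 2 = ‖q - y‖ ^ 2 - 2 * ⟪q - y, x - y⟫ + ‖x - y‖ ^ 2 := by
    have h3 : q - x = (q - y) - (x - y) := by abel
    rw [h3, norm_sub_sq_real]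
  have h4 : ‖x - y‖ < 2 * ε := lt_of_lt_of_le hxy (min_le_right _ _)
  nlinarith [pow_le_pow_left₀ (norm_nonneg (q - y)) h1 2, norm_nonneg (x - y)]

lemma le_of_sq_le' {x y : ℝ} (h : x ^ 2 ≤ y ^ 2) (hx : 0 ≤ x) (hy : 0 ≤ y) : x ≤ y := by
  nlinarith

set_option maxHeartbeats 1000000 in
/-- The descent lemma: if `p ∉ D'` but `0 ∈ D'`, there is a point `τ • p` on the segment
whose projection residual almost does not point against `p`. -/
lemma proj_descent {D' : Set (EuclideanSpace ℝ (Fin n))} (hcl : IsClosed D')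
    (h0' : (0:E) ∈ D') {p : E} (hp : p ∉ D') {γ : ℝ} (hγ : 0 < γ) :
    ∃ (τ : ℝ) (y : E), 0 < τ ∧ τ ≤ 1 ∧ y ∈ D' ∧
      (∀ x ∈ D', ‖τ • p - y‖ ≤ ‖τ • p - x‖) ∧ 0 < ‖τ • p - y‖ ∧
      ‖τ • p - y‖ ≤ ‖p‖ ∧ -(γ * ‖τ • p - y‖) < ⟪τ • p - y, p⟫ := by
  have hne : D'.Nonempty := ⟨0, h0'⟩
  have hP : 0 < ‖p‖ := by
    rcases eq_or_ne p 0 with rfl | h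
    · exact absurd h0' hp
    · exact norm_pos_iff.mpr h
  set P := ‖p‖ with hPdef
  set γ' := min γ P with hγ'def
  have hγ'0 : 0 < γ' := lt_min hγ hP
  have hγ'P : γ' ≤ P := min_le_right _ _
  have hγ'γ : γ' ≤ γ := min_le_left _ _
  set f : ℝ → ℝ := fun τ => infDist (τ • p) D' with hfdef
  have hfc : Continuous f := (continuous_infDist_pt D').comp (continuous_id.smul continuous_const)
  have hf0 : f 0 = 0 := by simp [hfdef, infDist_zero_of_mem h0']
  have hf1 : 0 < f 1 := by
    have := (hcl.notMem_iff_infDist_pos hne).mp hp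
    simpa [hfdef] using this
  set Z := Icc (0:ℝ) 1 ∩ f ⁻¹' {0} with hZdef
  have hZcl : IsClosed Z := isClosed_Icc.inter (isClosed_singleton.preimage hfc)
  have hZcomp : IsCompact Z := isCompact_Icc.of_isClosed_subset hZcl inter_subset_left
  have hZne : Z.Nonempty := ⟨0, ⟨le_refl _, zero_le_one⟩, hf0⟩
  set τs := sSup Z with hτsdef
  have hτZ : τs ∈ Z := hZcomp.sSup_mem hZne
  have hτ0 : 0 ≤ τs := hτZ.1.1
  have hτ1' : τs ≤ 1 := hτZ.1.2
  have hfτs : f τs = 0 := hτZ.2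
  have hτlt1 : τs < 1 := by
    rcases lt_or_eq_of_le hτ1' with h | h
    · exact h
    · rw [h] at hfτs; linarith
  have hys : τs • p ∈ D' := (hcl.mem_iff_infDist_zero hne).mpr hfτs
  have hfpos : ∀ τ, τs < τ → τ ≤ 1 → 0 < f τ := by
    intro τ h1 h2
    rcases (infDist_nonneg (s := D') (x := τ • p)).lt_or_eq with h | h
    · exact h
    · exfalso
      have hτZ' : τ ∈ Z := ⟨⟨le_of_lt (lt_of_le_of_lt hτ0 h1), h2⟩, h.symm⟩
      have := le_csSup hZcomp.bddAbove hτZ'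
      linarith
  have hproj : ∀ τ : ℝ, ∃ y ∈ D', infDist (τ • p) D' = dist (τ • p) y :=
    fun τ => hcl.exists_infDist_eq_dist hne (τ • p)
  choose Y hYmem hYdist using hproj
  have hfY : ∀ τ, f τ = ‖τ • p - Y τ‖ := fun τ => (hYdist τ).trans (dist_eq_norm _ _)
  by_contra hcon
  push_neg at hcon
  have key : ∀ τ, τs < τ → τ ≤ 1 → ⟪τ • p - Y τ, p⟫ ≤ -(γ * ‖τ • p - Y τ‖) := by
    intro τ hτa hτb
    have h1 : 0 < τ := lt_of_le_of_lt hτ0 hτa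
    have hmin : ∀ x ∈ D', ‖τ • p - Y τ‖ ≤ ‖τ • p - x‖ := by
      intro x hx
      rw [← dist_eq_norm, ← dist_eq_norm, ← hYdist]
      exact infDist_le_dist_of_mem hx
    have hpos : 0 < ‖τ • p - Y τ‖ := by rw [← hfY]; exact hfpos τ hτa hτb
    have hle : ‖τ • p - Y τ‖ ≤ P := by
      rw [← hfY]
      have h2 : f τ ≤ dist (τ • p) 0 := infDist_le_dist_of_mem h0'
      rw [dist_zero_right, norm_smul, Real.norm_eq_abs, abs_of_pos h1] at h2
      nlinarith
    exact hcon τ (Y τ) h1 hτb (hYmem τ) hmin hpos hle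
  have slope : ∀ τ s, τs < τ → τ ≤ 1 → 0 ≤ s → s * P ^ 2 ≤ γ' * f τ → τ + s ≤ 1 →
      f (τ + s) ≤ f τ - s * γ' / 2 := by
    intro τ s hτa hτb hs0 hs1 hs2
    have hd0 : 0 < f τ := hfpos τ hτa hτb
    have hdn : ‖τ • p - Y τ‖ = f τ := (hfY τ).symm
    have hkey := key τ hτa hτb
    rw [hdn] at hkey
    have hsp2 : ‖s • p‖ ^ 2 = s ^ 2 * P ^ 2 := by
      rw [norm_smul, mul_pow, Real.norm_eq_abs, sq_abs]
    have expand : ‖(τ + s) • p - Y τ‖ ^ 2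
        = f τ ^ 2 + 2 * s * ⟪τ • p - Y τ, p⟫ + s ^ 2 * P ^ 2 := by
      have hdec : (τ + s) • p - Y τ = (τ • p - Y τ) + s • p := by
        rw [add_smul]; abel
      rw [hdec, norm_add_sq_real, real_inner_smul_right, hsp2, hdn]
      ring
    have hγd : ⟪τ • p - Y τ, p⟫ ≤ -(γ' * f τ) := by nlinarith
    have hbound : ‖(τ + s) • p - Y τ‖ ^ 2 ≤ (f τ - s * γ' / 2) ^ 2 := by
      rw [expand]
      nlinarith [sq_nonneg (s * γ')]
    have hpos2 : 0 ≤ f τ - s * γ' / 2 := by nlinarith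
    have hfle : f (τ + s) ≤ ‖(τ + s) • p - Y τ‖ := by
      rw [← dist_eq_norm]
      exact infDist_le_dist_of_mem (hYmem τ)
    exact hfle.trans (le_of_sq_le' hbound (norm_nonneg _) hpos2)
  -- choose the starting point τ₁ := τs + h
  set h := min ((1 - τs)/2) (γ' * (1 - τs) / (8 * P)) with hhdef
  have hh0 : 0 < h :=
    lt_min (by linarith) (div_pos (mul_pos hγ'0 (by linarith)) (by positivity))
  have hhle1 : h ≤ (1 - τs)/2 := min_le_left _ _
  have hhle2 : h ≤ γ' * (1 - τs) / (8 * P) := min_le_right _ _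
  set τ₁ := τs + h with hτ₁def
  have hτ₁1 : τ₁ ≤ 1 := by simp only [hτ₁def]; linarith
  have hτ₁τ : τs < τ₁ := by simp only [hτ₁def]; linarith
  have hd₁pos : 0 < f τ₁ := hfpos τ₁ hτ₁τ hτ₁1
  have hd₁ : f τ₁ ≤ h * P := by
    have h1 : f τ₁ ≤ dist (τ₁ • p) (τs • p) := infDist_le_dist_of_mem hys
    have h2 : dist (τ₁ • p) (τs • p) = h * P := by
      rw [dist_eq_norm, ← sub_smul, norm_smul, Real.norm_eq_abs]
      have : τ₁ - τs = h := by simp [hτ₁def]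
      rw [this, abs_of_pos hh0]
    linarith
  set A := Icc τ₁ 1 ∩ {τ : ℝ | f τ ≤ f τ₁ - γ'/2 * (τ - τ₁)} with hAdef
  have hAcl : IsClosed A := isClosed_Icc.inter
    (isClosed_le hfc (by fun_prop))
  have hAcomp : IsCompact A := isCompact_Icc.of_isClosed_subset hAcl inter_subset_left
  have hAne : A.Nonempty := ⟨τ₁, ⟨le_refl _, hτ₁1⟩, by simp⟩
  set m := sSup A with hmdef
  have hmA : m ∈ A := hAcomp.sSup_mem hAne
  obtain ⟨⟨hm1, hm2⟩, hm3⟩ := hmA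
  have hmτ : τs < m := lt_of_lt_of_le hτ₁τ hm1
  have hfm0 : 0 < f m := hfpos m hmτ hm2
  rcases lt_or_eq_of_le hm2 with hm2' | hm2'
  · -- m < 1 : we can advance, contradicting sSup
    set s := min (γ' * f m / P ^ 2) (1 - m) with hsdef
    have hs0 : 0 < s := lt_min (by positivity) (by linarith)
    have hs1 : s * P ^ 2 ≤ γ' * f m := by
      have h1 : s ≤ γ' * f m / P ^ 2 := min_le_left _ _
      have h2 : (0:ℝ) < P ^ 2 := by positivity
      calc s * P ^ 2 ≤ (γ' * f m / P ^ 2) * P ^ 2 := by nlinarith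
        _ = γ' * f m := by field_simp
    have hs2 : m + s ≤ 1 := by
      have := min_le_right (γ' * f m / P ^ 2) (1 - m)
      linarith
    have hslope := slope m s hmτ hm2 hs0.le hs1 hs2
    have hmem : m + s ∈ A := by
      refine ⟨⟨by linarith, hs2⟩, ?_⟩
      simp only [mem_setOf_eq] at hm3 ⊢
      linarith
    have := le_csSup hAcomp.bddAbove hmem
    rw [← hmdef] at this
    linarith
  · -- m = 1 : f 1 would be negative
    rw [hm2'] at hm3
    simp only [mem_setOf_eq] at hm3
    have hP8 : h * P ≤ γ' * (1 - τs) / 8 := by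
      have h2 : (0:ℝ) < P := hP
      calc h * P ≤ (γ' * (1 - τs) / (8 * P)) * P := by nlinarith
        _ = γ' * (1 - τs) / 8 := by field_simp
    have h2 : (1 - τs)/2 ≤ 1 - τ₁ := by simp only [hτ₁def]; linarith
    have hf1pos : 0 < f 1 := hf1
    nlinarith [mul_le_mul_of_nonneg_left h2 hγ'0.le]

set_option maxHeartbeats 1000000 in
/-- Main lemma: a compact set strictly polar to all unit regular normals at `0`
is absorbed into `D` at small scales. -/
lemma main_absorb {D : Set (EuclideanSpace ℝ (Fin n))}
    (hD0 : (0:E) ∈ D) (hDreg : ClarkeRegularAt D 0)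
    {K : Set (EuclideanSpace ℝ (Fin n))} (hK : IsCompact K) {c : ℝ} (hc : 0 < c)
    (hpol : ∀ z ∈ K, ∀ u, u ∈ regNormal D 0 → ‖u‖ = 1 → ⟪u, z⟫ ≤ -c) :
    ∃ εb > (0:ℝ), ∀ ε : ℝ, 0 < ε → ε ≤ εb → ∀ z ∈ K, ε • z ∈ D := by
  obtain ⟨U, hU, hUcl⟩ := hDreg.1
  obtain ⟨r', hr'pos, hr'sub⟩ := Metric.mem_nhds_iff.mp hU
  set r := r'/2 with hrdef
  have hrpos : 0 < r := by positivity
  have hDr : IsClosed (D ∩ closedBall 0 r) := by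
    have heq : D ∩ closedBall 0 r = (D ∩ U) ∩ closedBall 0 r := by
      ext x
      constructor
      · rintro ⟨hxD, hxb⟩
        refine ⟨⟨hxD, hr'sub ?_⟩, hxb⟩
        rw [mem_ball, dist_zero_right]
        rw [mem_closedBall, dist_zero_right] at hxb
        calc ‖x‖ ≤ r := hxb
          _ < r' := by rw [hrdef]; linarith
      · rintro ⟨⟨hxD, _⟩, hxb⟩
        exact ⟨hxD, hxb⟩
    rw [heq]
    exact hUcl.inter isClosed_closedBall
  obtain ⟨M, hM⟩ := isBounded_iff_forall_norm_le.mp hK.isBounded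
  set M1 := max M 1 with hM1def
  have hM1pos : (0:ℝ) < M1 := lt_of_lt_of_le one_pos (le_max_right _ _)
  have hM1 : ∀ z ∈ K, ‖z‖ ≤ M1 := fun z hz => le_trans (hM z hz) (le_max_left _ _)
  set ε₀ := min 1 (r / (4 * M1)) with hε₀def
  have hε₀pos : 0 < ε₀ := lt_min one_pos (by positivity)
  by_contra hcon
  push_neg at hcon
  have hseq : ∀ j : ℕ, ∃ (ε : ℝ) (z : EuclideanSpace ℝ (Fin n)),
      0 < ε ∧ ε ≤ min ε₀ (1/(j+1)) ∧ z ∈ K ∧ ε • z ∉ D := by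
    intro j
    obtain ⟨ε, hε1, hε2, z, hz, hzd⟩ := hcon (min ε₀ (1/(j+1))) (lt_min hε₀pos (by positivity))
    exact ⟨ε, z, hε1, hε2, hz, hzd⟩
  choose εs zs hε1 hε2 hzK hzD using hseq
  have hεle : ∀ j, εs j ≤ ε₀ := fun j => le_trans (hε2 j) (min_le_left _ _)
  have hεto : Tendsto εs atTop (𝓝 0) := by
    apply squeeze_zero (fun j => (hε1 j).le)
      (fun j => le_trans (hε2 j) (min_le_right _ _))
    exact tendsto_one_div_add_atTop_nhds_zero_nat
  -- apply the descent lemma at each j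
  have hdesc : ∀ j : ℕ, ∃ (τ : ℝ) (y : EuclideanSpace ℝ (Fin n)), 0 < τ ∧ τ ≤ 1 ∧
      y ∈ D ∩ closedBall 0 r ∧
      (∀ x ∈ D ∩ closedBall 0 r, ‖τ • (εs j • zs j) - y‖ ≤ ‖τ • (εs j • zs j) - x‖) ∧
      0 < ‖τ • (εs j • zs j) - y‖ ∧ ‖τ • (εs j • zs j) - y‖ ≤ ‖εs j • zs j‖ ∧
      -((εs j * c / 2) * ‖τ • (εs j • zs j) - y‖) < ⟪τ • (εs j • zs j) - y, εs j • zs j⟫ := by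
    intro j
    apply proj_descent hDr ⟨hD0, mem_closedBall_self hrpos.le⟩
      (fun hmem => hzD j hmem.1) (div_pos (mul_pos (hε1 j) hc) two_pos)
  choose τs ys hτ0 hτ1 hymem hmin hdpos hdle hinner using hdesc
  -- notation
  set ps : ℕ → EuclideanSpace ℝ (Fin n) := fun j => εs j • zs j with hpsdef
  set ws : ℕ → EuclideanSpace ℝ (Fin n) := fun j => τs j • ps j - ys j with hwsdef
  have hpnorm : ∀ j, ‖ps j‖ ≤ εs j * M1 := by
    intro j
    show ‖εs j • zs j‖ ≤ _
    rw [norm_smul, Real.norm_eq_abs, abs_of_pos (hε1 j)]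
    exact mul_le_mul_of_nonneg_left (hM1 _ (hzK j)) (hε1 j).le
  have hpr : ∀ j, ‖ps j‖ ≤ r/4 := by
    intro j
    calc ‖ps j‖ ≤ εs j * M1 := hpnorm j
      _ ≤ ε₀ * M1 := mul_le_mul_of_nonneg_right (hεle j) hM1pos.le
      _ ≤ (r / (4 * M1)) * M1 := mul_le_mul_of_nonneg_right (min_le_right _ _) hM1pos.le
      _ = r/4 := by field_simp
  have hynorm : ∀ j, ‖ys j‖ ≤ 2 * (εs j * M1) := by
    intro j
    have h1 : ‖τs j • ps j‖ ≤ ‖ps j‖ := by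
      rw [norm_smul, Real.norm_eq_abs, abs_of_pos (hτ0 j)]
      nlinarith [norm_nonneg (ps j), hτ0 j, hτ1 j]
    have h2 : ‖ys j‖ ≤ ‖τs j • ps j‖ + ‖τs j • ps j - ys j‖ := by
      calc ‖ys j‖ = ‖τs j • ps j - (τs j • ps j - ys j)‖ := by congr 1; abel
        _ ≤ ‖τs j • ps j‖ + ‖τs j • ps j - ys j‖ := norm_sub_le _ _
    have h3 := hdle j
    have h4 := hpnorm j
    linarith
  have hyr : ∀ j, ‖ys j‖ ≤ r/2 := by
    intro j
    have h1 : ‖τs j • ps j‖ ≤ ‖ps j‖ := by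
      rw [norm_smul, Real.norm_eq_abs, abs_of_pos (hτ0 j)]
      nlinarith [norm_nonneg (ps j), hτ0 j, hτ1 j]
    have h2 : ‖ys j‖ ≤ ‖τs j • ps j‖ + ‖τs j • ps j - ys j‖ := by
      calc ‖ys j‖ = ‖τs j • ps j - (τs j • ps j - ys j)‖ := by congr 1; abel
        _ ≤ ‖τs j • ps j‖ + ‖τs j • ps j - ys j‖ := norm_sub_le _ _
    have h3 := hdle j
    have h4 := hpr j
    linarith
  -- unit proximal normals
  set us : ℕ → EuclideanSpace ℝ (Fin n) := fun j => ‖ws j‖⁻¹ • ws j with husdef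
  have hwne : ∀ j, ws j ≠ 0 := fun j => norm_pos_iff.mp (hdpos j)
  have hunorm : ∀ j, ‖us j‖ = 1 := fun j => norm_smul_inv_norm (𝕜 := ℝ) (hwne j)
  have hureg : ∀ j, us j ∈ regNormal D (ys j) := by
    intro j
    have hw : τs j • (εs j • zs j) - ys j ∈ regNormal D (ys j) := by
      apply prox_regNormal (show (0:ℝ) < r/4 by linarith)
      intro x hx hxy
      apply hmin j x
      refine ⟨hx, ?_⟩
      rw [mem_closedBall, dist_zero_right]
      have h1 : ‖x‖ ≤ ‖ys j‖ + ‖x - ys j‖ := by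
        calc ‖x‖ = ‖ys j + (x - ys j)‖ := by congr 1; abel
          _ ≤ ‖ys j‖ + ‖x - ys j‖ := norm_add_le _ _
      have := hyr j
      linarith
    exact regNormal_smul (inv_pos.mpr (hdpos j)) hw
  -- the inner product bound
  have hui : ∀ j, -(c/2) < ⟪us j, zs j⟫ := by
    intro j
    show -(c/2) < ⟪‖τs j • (εs j • zs j) - ys j‖⁻¹ • (τs j • (εs j • zs j) - ys j), zs j⟫
    set w := τs j • (εs j • zs j) - ys j with hwdef
    have hd : 0 < ‖w‖ := hdpos j
    have hi := hinner j
    have e2 : ⟪w, εs j • zs j⟫ = εs j * ⟪w, zs j⟫ := real_inner_smul_right _ _ _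
    rw [e2] at hi
    have h3 : -(c/2 * ‖w‖) < ⟪w, zs j⟫ := by
      by_contra h5
      push_neg at h5
      nlinarith [mul_le_mul_of_nonneg_left h5 (hε1 j).le]
    have e1 : ⟪(‖w‖⁻¹ • w : EuclideanSpace ℝ (Fin n)), zs j⟫ = ‖w‖⁻¹ * ⟪w, zs j⟫ :=
      real_inner_smul_left _ _ _
    rw [e1]
    have h6 : ‖w‖⁻¹ * (-(c/2 * ‖w‖)) < ‖w‖⁻¹ * ⟪w, zs j⟫ :=
      mul_lt_mul_of_pos_left h3 (inv_pos.mpr hd)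
    have h7 : ‖w‖⁻¹ * (-(c/2 * ‖w‖)) = -(c/2) := by
      field_simp
    linarith
  -- limits
  have hyto : Tendsto ys atTop (𝓝 0) := by
    rw [tendsto_zero_iff_norm_tendsto_zero]
    apply squeeze_zero (fun j => norm_nonneg _) hynorm
    have : Tendsto (fun j => 2 * (εs j * M1)) atTop (𝓝 (2 * (0 * M1))) :=
      ((hεto.mul_const M1).const_mul 2)
    simpa using this
  obtain ⟨zb, hzbK, φ, hφmono, hzto⟩ := hK.tendsto_subseq hzK
  have husph : ∀ j, us (φ j) ∈ sphere (0:EuclideanSpace ℝ (Fin n)) 1 := fun j =>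
    mem_sphere_zero_iff_norm.mpr (hunorm (φ j))
  obtain ⟨ub, hubS, ψ, hψmono, huto⟩ := (isCompact_sphere (0:EuclideanSpace ℝ (Fin n)) 1).tendsto_subseq husph
  set θ : ℕ → ℕ := φ ∘ ψ with hθdef
  have hθto : Tendsto θ atTop atTop := (hφmono.comp hψmono).tendsto_atTop
  have hzθ : Tendsto (fun j => zs (θ j)) atTop (𝓝 zb) := hzto.comp hψmono.tendsto_atTop
  have hyθ : Tendsto (fun j => ys (θ j)) atTop (𝓝 0) := hyto.comp hθto
  have huθ : Tendsto (fun j => us (θ j)) atTop (𝓝 ub) := huto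
  have hub_gen : ub ∈ genNormal D 0 :=
    ⟨fun j => ys (θ j), fun j => us (θ j), fun j => (hymem (θ j)).1,
      fun j => hureg (θ j), hyθ, huθ⟩
  have hub_reg : ub ∈ regNormal D 0 := by
    rw [← hDreg.2]; exact hub_gen
  have hub_norm : ‖ub‖ = 1 := mem_sphere_zero_iff_norm.mp hubS
  have hge : -(c/2) ≤ ⟪ub, zb⟫ := by
    apply ge_of_tendsto (huθ.inner hzθ)
    exact Eventually.of_forall fun j => (hui (θ j)).le
  have hle := hpol zb hzbK ub hub_reg hub_norm
  linarith

end Aux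

/-- compact convex sets in the interior of the tangent cone
(Lemma `lem:compex-sets-in-intr`). -/
theorem compact_sets_in_convex_cones {n : ℕ}
    (D C : Set (EuclideanSpace ℝ (Fin n))) (v : EuclideanSpace ℝ (Fin n))
    (hD0 : (0 : EuclideanSpace ℝ (Fin n)) ∈ D)
    (hDreg : ClarkeRegularAt D 0)
    (hCcomp : IsCompact C) (hCconv : Convex ℝ C)
    (hint : (interior (tanCone D 0)).Nonempty)
    (hCsub : C ⊆ tanCone D 0)
    (hv : v ∈ interior (tanCone D 0)) :
    ∃ δ₀ > (0:ℝ), ∀ δ : ℝ, 0 < δ → δ ≤ δ₀ →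
      ∃ εbar > (0:ℝ), ∀ ε : ℝ, 0 < ε → ε ≤ εbar →
        ∀ x ∈ C, ∀ u ∈ Metric.closedBall (0 : EuclideanSpace ℝ (Fin n)) 1,
          x + δ • v + δ ^ 2 • u ∈ ε⁻¹ • D := by
  obtain ⟨ρ₂, hρ₂, hball⟩ := Metric.mem_nhds_iff.mp (mem_interior_iff_mem_nhds.mp hv)
  set ρ := ρ₂ / 2 with hρdef
  have hρpos : 0 < ρ := by positivity
  have hρball : ∀ w : EuclideanSpace ℝ (Fin n), ‖w‖ = 1 → v + ρ • w ∈ tanCone D 0 := by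
    intro w hw
    apply hball
    rw [Metric.mem_ball, dist_eq_norm]
    have : v + ρ • w - v = ρ • w := by abel
    rw [this, norm_smul, Real.norm_eq_abs, abs_of_pos hρpos, hw]
    simp only [hρdef]
    linarith
  refine ⟨ρ / 2, by positivity, fun δ hδ hδρ => ?_⟩
  -- the compact set K = C + δ v + δ² 𝔹
  set K := (fun q : EuclideanSpace ℝ (Fin n) × EuclideanSpace ℝ (Fin n) =>
    q.1 + δ • v + δ ^ 2 • q.2) '' (C ×ˢ Metric.closedBall 0 1) with hKdef
  have hKcomp : IsCompact K := by
    apply (hCcomp.prod (isCompact_closedBall 0 1)).image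
    fun_prop
  have hpol : ∀ z ∈ K, ∀ u, u ∈ regNormal D 0 → ‖u‖ = 1 → ⟪u, z⟫ ≤ -(δ * ρ / 2) := by
    rintro z hz u hu hun
    obtain ⟨⟨x, w⟩, ⟨hx, hw⟩, rfl⟩ := hz
    have h1 : ⟪u, x⟫ ≤ 0 := regNormal_inner_nonpos hu (hCsub hx)
    have h2 : ⟪u, v⟫ ≤ -ρ := by
      have h3 := regNormal_inner_nonpos hu (hρball u hun)
      rw [inner_add_right, real_inner_smul_right, real_inner_self_eq_norm_sq, hun] at h3
      nlinarith
    have h3 : ⟪u, w⟫ ≤ 1 := by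
      have h4 : ‖w‖ ≤ 1 := mem_closedBall_zero_iff.mp hw
      calc ⟪u, w⟫ ≤ ‖u‖ * ‖w‖ := real_inner_le_norm u w
        _ ≤ 1 := by rw [hun]; simpa using h4
    simp only
    rw [inner_add_right, inner_add_right, real_inner_smul_right, real_inner_smul_right]
    nlinarith
  obtain ⟨εb, hεb, habs⟩ := main_absorb hD0 hDreg hKcomp (by positivity : (0:ℝ) < δ * ρ / 2) hpol
  refine ⟨εb, hεb, fun ε hε hεle x hx u hu => ?_⟩
  have hzK : x + δ • v + δ ^ 2 • u ∈ K := ⟨(x, u), ⟨hx, hu⟩, rfl⟩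
  have hmem := habs ε hε hεle _ hzK
  exact Set.mem_smul_set.mpr ⟨ε • (x + δ • v + δ ^ 2 • u), hmem, by
    rw [smul_smul, inv_mul_cancel₀ (ne_of_gt hε), one_smul]⟩
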